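/- Let p ≥ 1, let Q be a p×p matrix polynomial and P = Σ_{k=0}^{m} A_{m−k} z^k a monic p×p matrix polynomial of degree m ≥ 1 (A_0 = I_p), and suppose R(z) := Q(z)·P(z)⁻¹ admits the Laurent expansion R(z) = Σ_{j=0}^{k} z^j·s_{−(j+1)} + Σ_{j=0}^{∞} s_j·z^{−(j+1)} converging for all sufficiently large |z|. Then for every integer n ≥ 0 one has Σ_{i=0}^{m} s_{n+i}·A_{m−i} = 0_p; equivalently, every block Hankel matrix [s_{j+a+b}]_{a,b} built from (s_i)_{i≥0} annihilates the column (A_m, A_{m−1}, …, A_0)ᵀ of coefficients of P. -/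

import Mathlib

open Polynomial Matrix Filter
open scoped ComplexOrder

/-- The space of `p × p` complex matrices. -/
abbrev Mat (p : ℕ) := Matrix (Fin p) (Fin p) ℂ

/-- Evaluation of a matrix polynomial at a complex scalar. -/
noncomputable def mpEval {p : ℕ} (F : Polynomial (Mat p)) (z : ℂ) : Mat p :=
  Polynomial.eval (z • (1 : Mat p)) F

/-- The spectrum (set of zeros) of a matrix polynomial. -/
def mpSpec {p : ℕ} (F : Polynomial (Mat p)) : Set ℂ := {z | (mpEval F z).det = 0}

/-- The scalar polynomial `det F` of a matrix polynomial `F`. -/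
noncomputable def detPoly {p : ℕ} (F : Polynomial (Mat p)) : Polynomial ℂ :=
  (matPolyEquiv.symm F).det

/-- A matrix polynomial is regular if its determinant is not the zero polynomial. -/
def mpRegular {p : ℕ} (F : Polynomial (Mat p)) : Prop := detPoly F ≠ 0

/-- A matrix polynomial is unimodular if its determinant is a nonzero constant. -/
def Unimodular {p : ℕ} (G : Polynomial (Mat p)) : Prop :=
  ∃ c : ℂ, c ≠ 0 ∧ detPoly G = Polynomial.C c

/-- `F` and `G` are right coprime iff every common right divisor is unimodular. -/
def RightCoprime {p : ℕ} (F G : Polynomial (Mat p)) : Prop :=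
  ∀ G₀ : Polynomial (Mat p), (∃ C, F = C * G₀) → (∃ C, G = C * G₀) → Unimodular G₀

/-- The open upper half-plane. -/
def UHP : Set ℂ := {z | 0 < z.im}

/-- A matrix-valued Herglotz–Nevanlinna function: holomorphic on the open upper
half-plane with positive semidefinite imaginary part there. -/
def IsHNMat {p : ℕ} (R : ℂ → Mat p) : Prop :=
  (∀ i j : Fin p, DifferentiableOn ℂ (fun z => R z i j) UHP) ∧
  ∀ z ∈ UHP, ((2 * Complex.I)⁻¹ • (R z - (R z)ᴴ)).PosSemidef

/-- `R(z̄)* = R(z)` for `z` with both `z` and `z̄` outside the set `S`. -/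
def SelfAdjointOff {p : ℕ} (R : ℂ → Mat p) (S : Set ℂ) : Prop :=
  ∀ z : ℂ, z ∉ S → (starRingEnd ℂ) z ∉ S → (R ((starRingEnd ℂ) z))ᴴ = R z

/-- The block Hankel matrix `[s_{a+b}]_{a,b=0}^{m-1}`. -/
def blockHankel {p : ℕ} (s : ℕ → Mat p) (m : ℕ) :
    Matrix (Fin m × Fin p) (Fin m × Fin p) ℂ :=
  Matrix.of fun x y => s ((x.1 : ℕ) + (y.1 : ℕ)) x.2 y.2

/-- `R` admits the Laurent expansion
`R(z) = ∑_{j=0}^{k} z^j • sneg j + ∑_{j=0}^{∞} z^{-(j+1)} • spos j`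
(with `sneg j = s_{-(j+1)}` and `spos j = s_j`), converging for all
sufficiently large `|z|`. -/
def HasLaurentAt {p : ℕ} (R : ℂ → Mat p) (k : ℕ) (sneg spos : ℕ → Mat p) : Prop :=
  ∃ c : ℝ, ∀ z : ℂ, c < ‖z‖ →
    HasSum (fun j : ℕ => (z ^ (j + 1))⁻¹ • spos j)
      (R z - ∑ j ∈ Finset.range (k + 1), z ^ j • sneg j)

/-- A simple matrix polynomial: regular, and at every zero `λ` the multiplicity of
`λ` as a root of `det F` equals the nullity `p - rank F(λ)`. -/
def mpSimple {p : ℕ} (F : Polynomial (Mat p)) : Prop :=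
  mpRegular F ∧ ∀ lam : ℂ, (mpEval F lam).det = 0 →
    (detPoly F).rootMultiplicity lam = p - (mpEval F lam).rank

/-- Hurwitz stability: all zeros lie in the open left half-plane. -/
def HurwitzStable {p : ℕ} (F : Polynomial (Mat p)) : Prop :=
  ∀ z : ℂ, (mpEval F z).det = 0 → z.re < 0

/-- The even part `F_e` of a matrix polynomial, so that `F(z) = F_e(z²) + z F_o(z²)`. -/
noncomputable def evenPart {p : ℕ} (F : Polynomial (Mat p)) : Polynomial (Mat p) :=
  ∑ k ∈ Finset.range (F.natDegree + 1), Polynomial.C (F.coeff (2 * k)) * Polynomial.X ^ k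

/-- The odd part `F_o` of a matrix polynomial, so that `F(z) = F_e(z²) + z F_o(z²)`. -/
noncomputable def oddPart {p : ℕ} (F : Polynomial (Mat p)) : Polynomial (Mat p) :=
  ∑ k ∈ Finset.range (F.natDegree + 1), Polynomial.C (F.coeff (2 * k + 1)) * Polynomial.X ^ k

/-- The coefficientwise conjugate-transposed polynomial `F^∨`. -/
noncomputable def polyConjT {p : ℕ} (F : Polynomial (Mat p)) : Polynomial (Mat p) :=
  ∑ k ∈ Finset.range (F.natDegree + 1), Polynomial.C ((F.coeff k)ᴴ) * Polynomial.X ^ k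

open Topology in
lemma keyVanish {E : Type*} [NormedAddCommGroup E] [NormedSpace ℂ E]
    (g : ℕ → E) (r : ℝ) (hr : 0 < r)
    (H : ∀ w : ℂ, w ≠ 0 → ‖w‖ < r → HasSum (fun t => w ^ t • g t) 0) :
    ∀ t, g t = 0 := by
  classical
  set P : FormalMultilinearSeries ℂ ℂ E :=
    fun n => ContinuousMultilinearMap.mkPiRing ℂ (Fin n) (g n) with hPdef
  have happ : ∀ (n : ℕ) (y : ℂ), (P n fun _ => y) = y ^ n • g n := by
    intro n y
    simp [hPdef, ContinuousMultilinearMap.mkPiRing_apply, Finset.prod_const]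
  set f : ℂ → E := fun w => if w = 0 then g 0 else 0 with hfdef
  -- radius bound
  have hr2 : (0:ℝ) < r / 2 := by linarith
  have hw1norm : ‖((r/2 : ℝ) : ℂ)‖ = r / 2 := by
    rw [Complex.norm_real, Real.norm_eq_abs, abs_of_pos hr2]
  have hw1ne : ((r/2 : ℝ) : ℂ) ≠ 0 := by
    simp only [ne_eq, Complex.ofReal_eq_zero]; linarith
  have hsum1 := (H _ hw1ne (by rw [hw1norm]; linarith)).summable
  have htend : Filter.Tendsto (fun n => ‖P n‖ * ((r/2 : ℝ)) ^ n) Filter.atTop (𝓝 0) := by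
    have h0 := hsum1.tendsto_atTop_zero
    have h1 : Filter.Tendsto (fun n => ‖((r/2:ℝ):ℂ) ^ n • g n‖) Filter.atTop (𝓝 0) := by
      simpa using h0.norm
    refine h1.congr fun n => ?_
    rw [norm_smul, norm_pow, hw1norm, ContinuousMultilinearMap.norm_mkPiRing, mul_comm]
  set r2 : NNReal := (r/2 : ℝ).toNNReal with hr2def
  have hradius : (r2 : ENNReal) ≤ P.radius := by
    refine P.le_radius_of_isBigO ?_
    have : ((r2 : NNReal) : ℝ) = r / 2 := Real.coe_toNNReal _ hr2.le
    rw [this]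
    exact htend.isBigO_one ℝ
  have hball : HasFPowerSeriesOnBall f P 0 (r2 : ENNReal) := by
    refine ⟨hradius, by simpa [hr2def] using (ENNReal.coe_pos.mpr (Real.toNNReal_pos.mpr hr2)), ?_⟩
    intro y hy
    have hy' : ‖y‖ < r / 2 := by
      rw [Metric.emetric_ball_nnreal] at hy
      simpa [hr2def, Real.coe_toNNReal _ hr2.le] using hy
    by_cases hy0 : y = 0
    · have : (fun n => P n fun _ => y) = fun n => if n = 0 then g 0 else 0 := by
        funext n
        rw [happ, hy0]
        cases n with
        | zero => simp
        | succ n => simp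
      rw [this, hy0]
      simpa [hfdef] using hasSum_ite_eq 0 (g 0)
    · have := H y hy0 (by linarith)
      have hfy : f (0 + y) = 0 := by simp [hfdef, hy0]
      rw [hfy]
      refine this.congr_fun fun n => (happ n y)
  have hF : HasFPowerSeriesAt f P 0 := ⟨_, hball⟩
  -- g 0 = 0
  have hg0 : g 0 = 0 := by
    have hc : Filter.Tendsto f (𝓝 0) (𝓝 (g 0)) := by
      have := hF.continuousAt
      simpa [ContinuousAt, hfdef] using this
    have h1 : Filter.Tendsto f (𝓝[≠] (0:ℂ)) (𝓝 (g 0)) := hc.mono_left nhdsWithin_le_nhds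
    have h2 : Filter.Tendsto f (𝓝[≠] (0:ℂ)) (𝓝 0) := by
      refine Filter.Tendsto.congr' ?_ tendsto_const_nhds
      filter_upwards [self_mem_nhdsWithin] with x hx
      simp only [Set.mem_compl_iff, Set.mem_singleton_iff] at hx
      simp [hfdef, hx]
    exact tendsto_nhds_unique h1 h2
  have hfzero : f = fun _ => (0 : E) := by
    funext x
    by_cases hx : x = 0 <;> simp [hfdef, hx, hg0]
  rw [hfzero] at hF
  have hP0 : P = 0 := hF.eq_zero
  intro t
  have := congrFun hP0 t
  have h2 : (P t fun _ => (1:ℂ)) = 0 := by rw [this]; simp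
  rw [happ t 1] at h2
  simpa using h2

lemma mpEval_eq_sum {p : ℕ} (F : Polynomial (Mat p)) (z : ℂ) :
    mpEval F z = ∑ i ∈ Finset.range (F.natDegree + 1), z ^ i • F.coeff i := by
  rw [mpEval, Polynomial.eval_eq_sum_range]
  refine Finset.sum_congr rfl fun i _ => ?_
  rw [_root_.smul_pow, one_pow, mul_smul_comm, mul_one]

section unitsec

attribute [local instance] Matrix.linftyOpNormedRing Matrix.linftyOpNormedAlgebra

lemma aux_isUnit {p m : ℕ} (P : Polynomial (Mat p)) (hP : P.Monic)
    (hPdeg : P.natDegree = m) :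
    ∃ B : ℝ, 1 ≤ B ∧ ∀ z : ℂ, B < ‖z‖ → IsUnit (mpEval P z) := by
  classical
  set A : ℕ → Mat p := fun i => P.coeff i with hA
  have hAm : A m = 1 := by
    have := hP.coeff_natDegree
    rwa [hPdeg] at this
  refine ⟨max 1 (∑ i ∈ Finset.range m, ‖A i‖), le_max_left _ _, ?_⟩
  intro z hz
  have hz1 : (1:ℝ) < ‖z‖ := lt_of_le_of_lt (le_max_left _ _) hz
  have hzS : (∑ i ∈ Finset.range m, ‖A i‖) < ‖z‖ := lt_of_le_of_lt (le_max_right _ _) hz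
  have hz0 : z ≠ 0 := by
    intro h; rw [h] at hz1; simp at hz1; linarith
  set Ez : Mat p := ∑ i ∈ Finset.range m, (z ^ (m - i))⁻¹ • A i with hEz
  have hnorm : ‖Ez‖ < 1 := by
    have hb : ∀ i ∈ Finset.range m, ‖(z ^ (m - i))⁻¹ • A i‖ ≤ ‖A i‖ / ‖z‖ := by
      intro i hi
      have him : i < m := Finset.mem_range.mp hi
      rw [norm_smul, norm_inv, norm_pow, div_eq_inv_mul]
      have hple : ‖z‖ ≤ ‖z‖ ^ (m - i) := by
        calc ‖z‖ = ‖z‖ ^ 1 := (pow_one _).symm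
        _ ≤ ‖z‖ ^ (m - i) := by
            apply pow_le_pow_right₀ hz1.le
            omega
      gcongr
    calc ‖Ez‖ ≤ ∑ i ∈ Finset.range m, ‖(z ^ (m - i))⁻¹ • A i‖ := norm_sum_le _ _
    _ ≤ ∑ i ∈ Finset.range m, ‖A i‖ / ‖z‖ := Finset.sum_le_sum hb
    _ = (∑ i ∈ Finset.range m, ‖A i‖) / ‖z‖ := by rw [Finset.sum_div]
    _ < 1 := by rw [div_lt_one (by linarith)]; exact hzS
  have h1 : IsUnit ((1 : Mat p) + Ez) := by
    have := isUnit_one_sub_of_norm_lt_one (x := -Ez) (by simpa using hnorm)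
    simpa [sub_neg_eq_add] using this
  have hu1 : IsUnit (z ^ m • (1 : Mat p)) := by
    refine isUnit_iff_exists.mpr ⟨(z ^ m)⁻¹ • (1 : Mat p), ?_, ?_⟩ <;>
      rw [smul_mul_smul_comm] <;>
      simp [mul_inv_cancel₀ (pow_ne_zero m hz0), inv_mul_cancel₀ (pow_ne_zero m hz0)]
  have hfact : mpEval P z = (z ^ m • (1 : Mat p)) * ((1 : Mat p) + Ez) := by
    rw [mpEval_eq_sum, hPdeg, Finset.sum_range_succ]
    have hzm : z ^ m • A m = z ^ m • (1 : Mat p) := by rw [hAm]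
    rw [hzm, mul_add, mul_one, add_comm]
    congr 1
    rw [hEz, Finset.mul_sum]
    refine Finset.sum_congr rfl fun i hi => ?_
    have him : i < m := Finset.mem_range.mp hi
    rw [smul_mul_assoc, one_mul, smul_smul]
    congr 1
    have : z ^ m = z ^ i * z ^ (m - i) := by rw [← pow_add]; congr 1; omega
    rw [this, mul_inv_cancel_right₀ (pow_ne_zero _ hz0)]
  rw [hfact]
  exact hu1.mul h1

end unitsec

section matvanish

attribute [local instance] Matrix.normedAddCommGroup Matrix.normedSpace

lemma keyVanishMat {p : ℕ} (g : ℕ → Mat p) (r : ℝ) (hr : 0 < r)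
    (H : ∀ w : ℂ, w ≠ 0 → ‖w‖ < r → HasSum (fun t => w ^ t • g t) 0) :
    ∀ t, g t = 0 :=
  keyVanish g r hr H

end matvanish
/-- the Laurent coefficients `s_j` (`j ≥ 0`) of `R = Q·P⁻¹` with
`P = ∑_{k=0}^m A_{m−k} z^k` monic satisfy `∑_{i=0}^{m} s_{n+i}·A_{m−i} = 0` for
every `n ≥ 0` (note `A_{m−i}` is the coefficient of `z^i` in `P`). -/
theorem statement8 (p m k : ℕ) (hp : 1 ≤ p) (hm : 1 ≤ m)
    (Q P : Polynomial (Mat p)) (hP : P.Monic) (hPdeg : P.natDegree = m)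
    (R : ℂ → Mat p) (hR : ∀ z : ℂ, R z = mpEval Q z * (mpEval P z)⁻¹)
    (sneg spos : ℕ → Mat p) (hLaurent : HasLaurentAt R k sneg spos) :
    ∀ n : ℕ, ∑ i ∈ Finset.range (m + 1), spos (n + i) * P.coeff i = 0 := by
  classical
  intro n
  obtain ⟨c, hc⟩ := hLaurent
  obtain ⟨B, hB1, hBu⟩ := aux_isUnit P hP hPdeg
  set A : ℕ → Mat p := fun i => P.coeff i with hA
  set dQ := Q.natDegree with hdQ
  set K := dQ + k with hK
  have hPev : ∀ z : ℂ, mpEval P z = ∑ i ∈ Finset.range (m + 1), z ^ i • A i := by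
    intro z; rw [mpEval_eq_sum, hPdeg]
  have hQev : ∀ z : ℂ, mpEval Q z = ∑ d ∈ Finset.range (dQ + 1), z ^ d • Q.coeff d :=
    fun z => mpEval_eq_sum Q z
  set c1 : ℝ := max c B with hc1
  have hc1pos : (0:ℝ) < c1 := lt_of_lt_of_le one_pos (le_trans hB1 (le_max_right _ _))
  set g : ℕ → Mat p := fun t =>
    (∑ i ∈ Finset.range (m + 1),
      if _ : K + m - i + 1 ≤ t then spos (t - (K + m - i + 1)) * A i else 0)
    - ((∑ d ∈ Finset.range (dQ + 1), if t = K + m - d then Q.coeff d else 0)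
      - ∑ j ∈ Finset.range (k + 1), ∑ i ∈ Finset.range (m + 1),
          if t = K + m - (j + i) then sneg j * A i else 0) with hg
  have hgz : ∀ t, g t = 0 := by
    refine keyVanishMat g c1⁻¹ (inv_pos.mpr hc1pos) ?_
    intro w hw hwlt
    set z : ℂ := w⁻¹ with hzdef
    have hz0 : z ≠ 0 := inv_ne_zero hw
    have hwz : w * z = 1 := mul_inv_cancel₀ hw
    have hwpos : 0 < ‖w‖ := norm_pos_iff.mpr hw
    have hznorm : c1 < ‖z‖ := by
      rw [hzdef, norm_inv]
      have h := (inv_strictAnti₀ hwpos hwlt)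
      rwa [inv_inv] at h
    have hT := hc z (lt_of_le_of_lt (le_max_left c B) hznorm)
    set T : Mat p := R z - ∑ j ∈ Finset.range (k + 1), z ^ j • sneg j with hTdef
    have hpowinv : ∀ j : ℕ, (z ^ (j + 1))⁻¹ = w ^ (j + 1) := by
      intro j; rw [← inv_pow, hzdef, inv_inv]
    have hpowmul : ∀ e : ℕ, e ≤ K + m → w ^ (K + m) * z ^ e = w ^ (K + m - e) := by
      intro e he
      have h1 : w ^ (K + m) = w ^ (K + m - e) * w ^ e := by rw [← pow_add]; congr 1; omega
      rw [h1, mul_assoc, ← mul_pow, hwz, one_pow, mul_one]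
    -- analytic part
    have hterm : ∀ i ∈ Finset.range (m + 1), HasSum
        (fun t => if _ : K + m - i + 1 ≤ t then w ^ t • (spos (t - (K + m - i + 1)) * A i) else 0)
        (w ^ (K + m - i) • (T * A i)) := by
      intro i hi
      have h1 := (hT.mul_right (A i)).const_smul (w ^ (K + m - i))
      have h2 : (fun j : ℕ => w ^ (K + m - i) • (((z ^ (j + 1))⁻¹ • spos j) * A i))
          = fun j : ℕ => w ^ (K + m - i + 1 + j) • (spos j * A i) := by
        funext j
        rw [hpowinv, smul_mul_assoc, smul_smul, ← pow_add]
        congr 2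
        omega
      rw [h2] at h1
      refine (Function.Injective.hasSum_iff (g := fun j : ℕ => K + m - i + 1 + j)
        (fun a b hab => by simpa using hab) ?_).mp ?_
      · intro t ht
        rw [dif_neg]
        intro hle
        refine ht ⟨t - (K + m - i + 1), ?_⟩
        show K + m - i + 1 + (t - (K + m - i + 1)) = t
        omega
      · refine h1.congr_fun fun j => ?_
        simp only [Function.comp_apply]
        rw [dif_pos (Nat.le_add_right _ _), Nat.add_sub_cancel_left]
    have hval : w ^ (K + m) • (T * mpEval P z)
        = ∑ i ∈ Finset.range (m + 1), w ^ (K + m - i) • (T * A i) := by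
      rw [hPev z, Finset.mul_sum, Finset.smul_sum]
      refine Finset.sum_congr rfl fun i hi => ?_
      have him : i ≤ m := Nat.lt_succ_iff.mp (Finset.mem_range.mp hi)
      rw [mul_smul_comm, smul_smul, hpowmul i (by omega)]
    have hbig : HasSum
        (fun t => ∑ i ∈ Finset.range (m + 1),
          if _ : K + m - i + 1 ≤ t then w ^ t • (spos (t - (K + m - i + 1)) * A i) else 0)
        (w ^ (K + m) • (T * mpEval P z)) := by
      rw [hval]; exact hasSum_sum hterm
    -- polynomial part
    have hsingle : ∀ (e : ℕ) (M : Mat p),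
        HasSum (fun t => w ^ t • (if t = e then M else 0)) (w ^ e • M) := by
      intro e M
      have heq : (fun t => w ^ t • (if t = e then M else 0))
          = fun t => if t = e then w ^ e • M else 0 := by
        funext t
        by_cases h : t = e
        · rw [if_pos h, if_pos h, h]
        · rw [if_neg h, if_neg h, smul_zero]
      rw [heq]
      exact hasSum_ite_eq e (w ^ e • M)
    have hq1 : HasSum
        (fun t => ∑ d ∈ Finset.range (dQ + 1), w ^ t • (if t = K + m - d then Q.coeff d else 0))
        (∑ d ∈ Finset.range (dQ + 1), w ^ (K + m - d) • Q.coeff d) :=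
      hasSum_sum (fun d _ => hsingle (K + m - d) (Q.coeff d))
    have hq2 : HasSum
        (fun t => ∑ j ∈ Finset.range (k + 1), ∑ i ∈ Finset.range (m + 1),
          w ^ t • (if t = K + m - (j + i) then sneg j * A i else 0))
        (∑ j ∈ Finset.range (k + 1), ∑ i ∈ Finset.range (m + 1),
          w ^ (K + m - (j + i)) • (sneg j * A i)) :=
      hasSum_sum (fun j _ => hasSum_sum (fun i _ => hsingle (K + m - (j + i)) (sneg j * A i)))
    have hq := hq1.sub hq2
    have hRP : R z * mpEval P z = mpEval Q z := by
      rw [hR z, mul_assoc, Matrix.nonsing_inv_mul _ ((Matrix.isUnit_iff_isUnit_det _).mp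
        (hBu z (lt_of_le_of_lt (le_max_right c B) hznorm))), mul_one]
    have hTP : T * mpEval P z = mpEval Q z
        - (∑ j ∈ Finset.range (k + 1), z ^ j • sneg j) * mpEval P z := by
      rw [hTdef, sub_mul, hRP]
    have hval2 : (∑ d ∈ Finset.range (dQ + 1), w ^ (K + m - d) • Q.coeff d)
        - (∑ j ∈ Finset.range (k + 1), ∑ i ∈ Finset.range (m + 1),
            w ^ (K + m - (j + i)) • (sneg j * A i))
        = w ^ (K + m) • (T * mpEval P z) := by
      rw [hTP, smul_sub]
      congr 1
      · rw [hQev z, Finset.smul_sum]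
        refine Finset.sum_congr rfl fun d hd => ?_
        have hdd : d ≤ dQ := Nat.lt_succ_iff.mp (Finset.mem_range.mp hd)
        rw [smul_smul, hpowmul d (by omega)]
      · rw [hPev z, Finset.sum_mul_sum, Finset.smul_sum]
        refine Finset.sum_congr rfl fun j hj => ?_
        have hjj : j ≤ k := Nat.lt_succ_iff.mp (Finset.mem_range.mp hj)
        rw [Finset.smul_sum]
        refine Finset.sum_congr rfl fun i hi => ?_
        have hii : i ≤ m := Nat.lt_succ_iff.mp (Finset.mem_range.mp hi)
        rw [smul_mul_smul_comm, ← pow_add, smul_smul, hpowmul (j + i) (by omega)]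
    rw [hval2] at hq
    have hfinal := hbig.sub hq
    rw [sub_self] at hfinal
    refine hfinal.congr_fun fun t => ?_
    simp only [hg]
    rw [smul_sub, smul_sub, Finset.smul_sum, Finset.smul_sum]
    congr 1
    · refine Finset.sum_congr rfl fun i hi => ?_
      by_cases h : K + m - i + 1 ≤ t
      · rw [dif_pos h, dif_pos h]
      · rw [dif_neg h, dif_neg h, smul_zero]
    · congr 1
      rw [Finset.smul_sum]
      refine Finset.sum_congr rfl fun j hj => ?_
      rw [Finset.smul_sum]
  -- conclude
  have hfin := hgz (K + m + n + 1)
  simp only [hg] at hfin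
  have e1 : ∀ i ∈ Finset.range (m + 1),
      (if _ : K + m - i + 1 ≤ K + m + n + 1 then
        spos (K + m + n + 1 - (K + m - i + 1)) * A i else 0)
      = spos (n + i) * A i := by
    intro i hi
    have him : i ≤ m := Nat.lt_succ_iff.mp (Finset.mem_range.mp hi)
    rw [dif_pos (by omega)]
    have : K + m + n + 1 - (K + m - i + 1) = n + i := by omega
    rw [this]
  rw [Finset.sum_congr rfl e1] at hfin
  have e2 : (∑ d ∈ Finset.range (dQ + 1),
      if K + m + n + 1 = K + m - d then Q.coeff d else 0) = 0 := by
    refine Finset.sum_eq_zero fun d _ => ?_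
    rw [if_neg]
    omega
  have e3 : (∑ j ∈ Finset.range (k + 1), ∑ i ∈ Finset.range (m + 1),
      if K + m + n + 1 = K + m - (j + i) then sneg j * A i else 0) = 0 := by
    refine Finset.sum_eq_zero fun j _ => Finset.sum_eq_zero fun i _ => ?_
    rw [if_neg]
    omega
  rw [e2, e3, sub_zero, sub_zero] at hfin
  exact hfin
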